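/- Fix real numbers L₁ ≥ 1 and q ∈ (0,1) with L₁·ln(1/q) ≥ 0, and suppose exp(-(L₁/4)·ln(1/q)) ≤ exp(-ln(1+2/δ)) for δ ∈ (0,1]. Then the double sum ∑_{r=1}^∞ ∑_{k=0}^{r-1} exp(-(r·2^k·L₁/4)·ln(1/q)) ≤ δ. -/

import Mathlib

theorem brakebooster_double_sum (L₁ q δ : ℝ) (hL : 1 ≤ L₁)
    (hq0 : 0 < q) (hq1 : q < 1)
    (hnn : 0 ≤ L₁ * Real.log (1 / q))
    (hδ0 : 0 < δ) (hδ1 : δ ≤ 1)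
    (hkey : Real.exp (-(L₁ / 4) * Real.log (1 / q)) ≤
      Real.exp (-Real.log (1 + 2 / δ))) :
    ∑' r : ℕ, ∑ k ∈ Finset.range (r + 1),
        Real.exp (-(((r : ℝ) + 1) * 2 ^ k * L₁ / 4) * Real.log (1 / q)) ≤ δ := by
  set a : ℝ := (L₁ / 4) * Real.log (1 / q) with ha_def
  have ha : 0 ≤ a := by
    have : 0 ≤ L₁ * Real.log (1 / q) := hnn
    rw [ha_def]; nlinarith
  set x : ℝ := Real.exp (-a) with hx_def
  have hx0 : 0 < x := Real.exp_pos _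
  -- x ≤ δ/(δ+2)
  have h2δ : (0:ℝ) < 1 + 2 / δ := by positivity
  have hxc : x ≤ δ / (δ + 2) := by
    have h1 : Real.exp (-Real.log (1 + 2 / δ)) = δ / (δ + 2) := by
      rw [Real.exp_neg, Real.exp_log h2δ]
      field_simp
    calc x ≤ Real.exp (-Real.log (1 + 2 / δ)) := by
            simpa [hx_def, ha_def, neg_mul] using hkey
      _ = δ / (δ + 2) := h1
  have hc1 : δ / (δ + 2) < 1 := by
    rw [div_lt_one (by linarith)]; linarith
  have hx1 : x < 1 := lt_of_le_of_lt hxc hc1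
  have h1x : 0 < 1 - x := by linarith
  -- termwise bound
  have hterm : ∀ r k : ℕ,
      Real.exp (-(((r : ℝ) + 1) * 2 ^ k * L₁ / 4) * Real.log (1 / q)) ≤
        (x ^ (r + 1)) ^ (k + 1) := by
    intro r k
    have hpow : (x ^ (r + 1)) ^ (k + 1) = Real.exp (-((((r:ℕ)+1) * (k+1) : ℕ) * a)) := by
      rw [← pow_mul, hx_def, ← Real.exp_nat_mul]
      ring_nf
    rw [hpow]
    apply Real.exp_le_exp.mpr
    have hk2 : ((k:ℝ) + 1) ≤ 2 ^ k := by
      have := Nat.lt_two_pow_self (n := k)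
      have : (k:ℝ) + 1 ≤ (2:ℝ) ^ k := by
        exact_mod_cast Nat.succ_le_of_lt (Nat.lt_two_pow_self (n := k))
      exact this
    have hr0 : (0:ℝ) ≤ (r:ℝ) + 1 := by positivity
    have key : ((r:ℝ) + 1) * ((k:ℝ) + 1) * a ≤ ((r:ℝ) + 1) * 2 ^ k * a := by
      apply mul_le_mul_of_nonneg_right _ ha
      apply mul_le_mul_of_nonneg_left hk2 hr0
    have heq : -(((r:ℝ) + 1) * 2 ^ k * L₁ / 4) * Real.log (1 / q) =
        -(((r:ℝ) + 1) * 2 ^ k * a) := by rw [ha_def]; ring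
    push_cast
    rw [heq]
    linarith [key]
  -- inner sum bound
  have hinner : ∀ r : ℕ,
      ∑ k ∈ Finset.range (r + 1),
        Real.exp (-(((r : ℝ) + 1) * 2 ^ k * L₁ / 4) * Real.log (1 / q)) ≤
        x ^ (r + 1) * (1 - x)⁻¹ := by
    intro r
    set y : ℝ := x ^ (r + 1) with hy_def
    have hy0 : 0 ≤ y := by positivity
    have hyx : y ≤ x := by
      calc y = x ^ (r + 1) := rfl
        _ ≤ x ^ 1 := pow_le_pow_of_le_one hx0.le hx1.le (by omega)
        _ = x := pow_one x
    have hy1 : y < 1 := lt_of_le_of_lt hyx hx1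
    calc ∑ k ∈ Finset.range (r + 1),
          Real.exp (-(((r : ℝ) + 1) * 2 ^ k * L₁ / 4) * Real.log (1 / q))
        ≤ ∑ k ∈ Finset.range (r + 1), y ^ (k + 1) :=
          Finset.sum_le_sum fun k _ => hterm r k
      _ = y * ∑ k ∈ Finset.range (r + 1), y ^ k := by
          rw [Finset.mul_sum]; exact Finset.sum_congr rfl fun k _ => pow_succ' y k
      _ ≤ y * (1 - y)⁻¹ := by
          apply mul_le_mul_of_nonneg_left _ hy0
          calc ∑ k ∈ Finset.range (r + 1), y ^ k
              ≤ ∑' k : ℕ, y ^ k := Summable.sum_le_tsum _ (fun k _ => by positivity)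
                (summable_geometric_of_lt_one hy0 hy1)
            _ = (1 - y)⁻¹ := tsum_geometric_of_lt_one hy0 hy1
      _ ≤ y * (1 - x)⁻¹ := by
          apply mul_le_mul_of_nonneg_left _ hy0
          apply inv_anti₀ h1x
          linarith
  have hg_sum : Summable (fun r : ℕ => x ^ (r + 1) * (1 - x)⁻¹) := by
    apply Summable.mul_right
    exact (summable_geometric_of_lt_one hx0.le hx1).comp_injective (add_left_injective 1)
  have hf_sum : Summable (fun r : ℕ => ∑ k ∈ Finset.range (r + 1),
      Real.exp (-(((r : ℝ) + 1) * 2 ^ k * L₁ / 4) * Real.log (1 / q))) := by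
    apply Summable.of_nonneg_of_le (fun r => Finset.sum_nonneg fun k _ => (Real.exp_pos _).le)
      hinner hg_sum
  calc ∑' r : ℕ, ∑ k ∈ Finset.range (r + 1),
        Real.exp (-(((r : ℝ) + 1) * 2 ^ k * L₁ / 4) * Real.log (1 / q))
      ≤ ∑' r : ℕ, x ^ (r + 1) * (1 - x)⁻¹ := Summable.tsum_le_tsum hinner hf_sum hg_sum
    _ = (∑' r : ℕ, x ^ (r + 1)) * (1 - x)⁻¹ := tsum_mul_right
    _ = x * (1 - x)⁻¹ * (1 - x)⁻¹ := by
        congr 1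
        have : ∑' r : ℕ, x ^ (r + 1) = x * ∑' r : ℕ, x ^ r := by
          rw [← tsum_mul_left]
          exact tsum_congr fun r => pow_succ' x r
        rw [this, tsum_geometric_of_lt_one hx0.le hx1]
    _ ≤ δ := by
        have h2 : 1 - x ≥ 2 / (δ + 2) := by
          have : δ / (δ + 2) + 2 / (δ + 2) = 1 := by field_simp
          linarith
        have hinv : (1 - x)⁻¹ ≤ (δ + 2) / 2 := by
          have h := inv_anti₀ (by positivity : (0:ℝ) < 2 / (δ + 2)) h2
          rwa [inv_div] at h
        have hnn2 : (0:ℝ) ≤ (1 - x)⁻¹ := by positivity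
        calc x * (1 - x)⁻¹ * (1 - x)⁻¹
            ≤ (δ / (δ + 2)) * ((δ + 2) / 2) * ((δ + 2) / 2) := by
              apply mul_le_mul (mul_le_mul hxc hinv hnn2 (by positivity)) hinv hnn2 (by positivity)
          _ = δ * (δ + 2) / 4 := by field_simp; ring
          _ ≤ δ := by nlinarith
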